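/- Let A_δ be the simple perturbed PCM with Perron eigenvalue λ and Perron eigenvector w (normalized so that w_2 = (1/x_1)[λ − (1 − 1/δ)(λ−n+2)] and w_j = (1/x_{j-1})(λ−1+1/δ) for j ≥ 3). For every j ∈ {3,…,n}: if δ > 1 then w_2/w_j < a_{2j} = x_{j-1}/x_1, and if δ < 1 then w_2/w_j > a_{2j}. -/

import Mathlib

/-- A pairwise comparison matrix: positive entries with the reciprocal property. -/
def IsPCM {n : ℕ} (A : Matrix (Fin n) (Fin n) ℝ) : Prop :=
  (∀ i j, 0 < A i j) ∧ (∀ i j, A j i = 1 / A i j)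

/-- A PCM is consistent if `a i k * a k j = a i j` for all `i j k`. -/
def IsConsistent {n : ℕ} (A : Matrix (Fin n) (Fin n) ℝ) : Prop :=
  ∀ i j k, A i k * A k j = A i j

/-- `lam` together with a positive eigenvector `w` forms the Perron eigenpair of `A`
(for a positive matrix, the eigenvalue admitting a positive eigenvector is exactly
the Perron (maximal) eigenvalue). -/
def IsPerronEigenpair {n : ℕ} (A : Matrix (Fin n) (Fin n) ℝ) (lam : ℝ)
    (w : Fin n → ℝ) : Prop :=
  (∀ i, 0 < w i) ∧ A.mulVec w = lam • w

/-- The simple perturbed PCM `A_δ`: the consistent PCM generated by positive weights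
`x` (with `x 0 = 1`), whose entry in position (1,2) (0-based: (0,1)) is multiplied
by `δ` and its reciprocal by `1/δ`. -/
noncomputable def simplePerturbed {n : ℕ} (x : Fin n → ℝ) (δ : ℝ) : Matrix (Fin n) (Fin n) ℝ :=
  fun i j =>
    if i.val = 0 ∧ j.val = 1 then x j * δ
    else if i.val = 1 ∧ j.val = 0 then 1 / (x i * δ)
    else x j / x i

/-- A positive weight vector `w` is efficient for `A` if no positive vector `w'`
approximates every entry at least as well, and some entry strictly better. -/
def IsEfficient {n : ℕ} (A : Matrix (Fin n) (Fin n) ℝ) (w : Fin n → ℝ) : Prop :=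
  ¬ ∃ w' : Fin n → ℝ, (∀ i, 0 < w' i) ∧
      (∀ i j, |A i j - w' i / w' j| ≤ |A i j - w i / w j|) ∧
      (∃ k l, |A k l - w' k / w' l| < |A k l - w k / w l|)

/-- Lemma 3.3: with w₂ = (1/x₁)[λ − (1−1/δ)(λ−n+2)] and
w_j = (1/x_{j-1})(λ−1+1/δ) for j ≥ 3: if δ > 1 then w₂/w_j < a₂ⱼ = x_{j-1}/x₁,
and if δ < 1 then w₂/w_j > a₂ⱼ. -/
theorem ratio_w2_wj_vs_a2j {n : ℕ} (hn : 3 ≤ n)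
    (x : Fin n → ℝ) (hx : ∀ i, 0 < x i) (hx0 : ∀ i : Fin n, i.val = 0 → x i = 1)
    (δ : ℝ) (hδ : 0 < δ) (hδ1 : δ ≠ 1)
    (lam : ℝ) (hlam : ∃ v, IsPerronEigenpair (simplePerturbed x δ) lam v)
    (hgt : (n : ℝ) < lam) :
    ∀ j : Fin n, 2 ≤ j.val →
      (1 < δ →
        ((1 / x ⟨1, by omega⟩) * (lam - (1 - 1 / δ) * (lam - n + 2))) /
            ((1 / x j) * (lam - 1 + 1 / δ)) < x j / x ⟨1, by omega⟩) ∧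
      (δ < 1 →
        ((1 / x ⟨1, by omega⟩) * (lam - (1 - 1 / δ) * (lam - n + 2))) /
            ((1 / x j) * (lam - 1 + 1 / δ)) > x j / x ⟨1, by omega⟩) := by
  intro j hj
  have hx1 : 0 < x ⟨1, by omega⟩ := hx _
  have hxj : 0 < x j := hx _
  have hn3 : (3 : ℝ) ≤ (n : ℝ) := by exact_mod_cast hn
  have hD : 0 < lam - 1 + 1 / δ := by
    have : 0 < 1 / δ := by positivity
    linarith
  have hDen : 0 < (1 / x j) * (lam - 1 + 1 / δ) := by positivity
  constructor
  · intro h1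
    have hN : lam - (1 - 1 / δ) * (lam - n + 2) < lam - 1 + 1 / δ := by
      have h1δ : 1 / δ < 1 := by
        rw [div_lt_one hδ]; linarith
      nlinarith [mul_pos (sub_pos.mpr h1δ) (show (0:ℝ) < lam - n + 1 by linarith)]
    rw [div_lt_div_iff₀ hDen hx1]
    have key : (1 / x ⟨1, by omega⟩) * (lam - (1 - 1 / δ) * (lam - n + 2)) * x ⟨1, by omega⟩
        = lam - (1 - 1 / δ) * (lam - n + 2) := by
      field_simp
    have key2 : x j * ((1 / x j) * (lam - 1 + 1 / δ)) = lam - 1 + 1 / δ := by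
      field_simp
    rw [key, key2]; exact hN
  · intro h1
    have hN : lam - 1 + 1 / δ < lam - (1 - 1 / δ) * (lam - n + 2) := by
      have h1δ : 1 < 1 / δ := by
        rw [lt_div_iff₀ hδ]; linarith
      nlinarith [mul_pos (sub_pos.mpr h1δ) (show (0:ℝ) < lam - n + 1 by linarith)]
    rw [gt_iff_lt, div_lt_div_iff₀ hx1 hDen]
    have key : (1 / x ⟨1, by omega⟩) * (lam - (1 - 1 / δ) * (lam - n + 2)) * x ⟨1, by omega⟩
        = lam - (1 - 1 / δ) * (lam - n + 2) := by
      field_simp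
    have key2 : x j * ((1 / x j) * (lam - 1 + 1 / δ)) = lam - 1 + 1 / δ := by
      field_simp
    rw [key, key2]; exact hN
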